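/- Let f be holomorphic on Ω(c,C)^m with asymptotic expansion a. Then for every i ∈ {1,…,m} the partial derivative ∂f/∂zᵢ is holomorphic on Ω(c,C)^m and has asymptotic expansion α ↦ αᵢ·a(α). -/

import Mathlib

noncomputable section
open scoped Classical

/-- Logarithmic model of a standard quadratic domain:
`Ω(c,C) = {z : Re z < log c - C·√|Im z|}`. -/
def SQD (c C : ℝ) : Set ℂ := {z : ℂ | z.re < Real.log c - C * Real.sqrt |z.im|}

/-- The cartesian power `Ω(c,C)^m`. -/
def QDom (c C : ℝ) (m : ℕ) : Set (Fin m → ℂ) := {z | ∀ i, z i ∈ SQD c C}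

/-- Open disc `D_R` of radius `R` centred at `0`. -/
def Disc (R : ℝ) : Set ℂ := {w : ℂ | ‖w‖ < R}

/-- Polydisc `D_R^n`. -/
def PDisc (R : ℝ) (n : ℕ) : Set (Fin n → ℂ) := {y | ∀ j, y j ∈ Disc R}

/-- The exponential monomial `exp⟨α,z⟩`. -/
def expMono {m : ℕ} (α : Fin m → ℝ) (z : Fin m → ℂ) : ℂ :=
  Complex.exp (∑ i, (α i : ℂ) * z i)

/-- Euclidean norm of `E(z) = (exp (Re z₁), …, exp (Re z_m))`. -/
def eNorm {m : ℕ} (z : Fin m → ℂ) : ℝ :=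
  Real.sqrt (∑ i, Real.exp ((z i).re) ^ 2)

/-- A generalized power series with natural support: nonnegative exponents, and in each
coordinate the set of exponents below any bound is finite. -/
def NaturalSeries {m : ℕ} (a : (Fin m → ℝ) → ℂ) : Prop :=
  (∀ α, a α ≠ 0 → ∀ i, 0 ≤ α i) ∧
  ∀ i : Fin m, ∀ R : ℝ, 0 < R → {r : ℝ | (∃ α, a α ≠ 0 ∧ α i = r) ∧ r ≤ R}.Finite

/-- `f` has asymptotic expansion `a` on `Ω(c,C)^m`: for every `ν > 0` there is a smaller
standard quadratic domain on which `f` minus the partial sum of weight `≤ ν` is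
`o(‖E(z)‖^ν)` as `‖E(z)‖ → 0`. -/
def HasAsymExp {m : ℕ} (c C : ℝ) (f : (Fin m → ℂ) → ℂ) (a : (Fin m → ℝ) → ℂ) : Prop :=
  NaturalSeries a ∧
  ∀ ν : ℝ, 0 < ν → ∃ c' C' : ℝ, 0 < c' ∧ 0 < C' ∧ SQD c' C' ⊆ SQD c C ∧
    ∃ F : Finset (Fin m → ℝ),
      (∀ α, α ∈ F ↔ a α ≠ 0 ∧ ∑ i, α i ≤ ν) ∧
      ∀ ε : ℝ, 0 < ε → ∃ δ : ℝ, 0 < δ ∧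
        ∀ z ∈ QDom c' C' m, eNorm z < δ →
          ‖f z - ∑ α ∈ F, a α * expMono α z‖ ≤ ε * eNorm z ^ ν

open MeasureTheory in
section


open Metric Set

lemma isOpen_SQD (c C : ℝ) : IsOpen (SQD c C) := by
  have h : Continuous fun z : ℂ => z.re + C * Real.sqrt |z.im| := by
    continuity
  have he : SQD c C = {z : ℂ | z.re + C * Real.sqrt |z.im| < Real.log c} := by
    ext z; simp only [SQD, Set.mem_setOf_eq, lt_sub_iff_add_lt]
  rw [he]; exact isOpen_lt h continuous_const

lemma isOpen_QDom (c C : ℝ) (m : ℕ) : IsOpen (QDom c C m) := by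
  have he : QDom c C m = Set.pi Set.univ (fun _ : Fin m => SQD c C) := by
    ext z; simp [QDom, Set.mem_pi]
  rw [he]
  exact isOpen_set_pi Set.finite_univ (fun i _ => isOpen_SQD c C)

lemma eNorm_nonneg {m : ℕ} (z : Fin m → ℂ) : 0 ≤ eNorm z := Real.sqrt_nonneg _

lemma hasDerivAt_slice {m : ℕ} {f : (Fin m → ℂ) → ℂ} {z : Fin m → ℂ} {i : Fin m} {t : ℂ}
    (hf : DifferentiableAt ℂ f (Function.update z i t)) :
    HasDerivAt (fun s => f (Function.update z i s))
      (fderiv ℂ f (Function.update z i t) (Pi.single i 1)) t :=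
  hf.hasFDerivAt.comp_hasDerivAt t (hasDerivAt_update z i t)

lemma hasDerivAt_expMono_slice {m : ℕ} (α : Fin m → ℝ) (z : Fin m → ℂ) (i : Fin m) (t : ℂ) :
    HasDerivAt (fun s => expMono α (Function.update z i s))
      ((α i : ℂ) * expMono α (Function.update z i t)) t := by
  have key : ∀ s : ℂ, expMono α (Function.update z i s)
      = Complex.exp ((α i : ℂ) * s + ∑ j ∈ Finset.univ.erase i, (α j : ℂ) * z j) := by
    intro s
    unfold expMono
    congr 1
    rw [← Finset.add_sum_erase _ _ (Finset.mem_univ i)]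
    congr 1
    · simp
    · exact Finset.sum_congr rfl fun j hj => by
        rw [Function.update_of_ne (Finset.ne_of_mem_erase hj)]
  simp only [key]
  have h := ((((hasDerivAt_id t).const_mul ((α i : ℂ)))).add_const
    (∑ j ∈ Finset.univ.erase i, (α j : ℂ) * z j)).cexp
  convert h using 1
  · rfl
  · rfl
  · simp only [id_eq]
    ring

lemma sqrt_abs_add_one (a : ℝ) : Real.sqrt (|a| + 1) ≤ Real.sqrt |a| + 1 := by
  have ha : (0:ℝ) ≤ |a| := abs_nonneg a
  calc Real.sqrt (|a| + 1) ≤ Real.sqrt ((Real.sqrt |a| + 1) ^ 2) := by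
        apply Real.sqrt_le_sqrt
        nlinarith [Real.sq_sqrt ha, Real.sqrt_nonneg |a|]
    _ = Real.sqrt |a| + 1 := Real.sqrt_sq (by positivity)

lemma sqd_shrink {c' C' : ℝ} (hc' : 0 < c') (hC' : 0 ≤ C') {z t : ℂ}
    (hz : z ∈ SQD (c' * Real.exp (-(1 + C'))) C') (ht : dist t z ≤ 1) : t ∈ SQD c' C' := by
  have hlog : Real.log (c' * Real.exp (-(1 + C'))) = Real.log c' - (1 + C') := by
    rw [Real.log_mul (ne_of_gt hc') (Real.exp_ne_zero _), Real.log_exp]; ring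
  have hz' : z.re < Real.log c' - (1 + C') - C' * Real.sqrt |z.im| := by
    have h0 : z.re < Real.log (c' * Real.exp (-(1 + C'))) - C' * Real.sqrt |z.im| := hz
    rwa [hlog] at h0
  have habs : ‖t - z‖ ≤ 1 := by rwa [Complex.dist_eq] at ht
  have hre : t.re ≤ z.re + 1 := by
    have h1 : |t.re - z.re| ≤ 1 := le_trans (by simpa using Complex.abs_re_le_norm (t - z)) habs
    have := abs_le.mp h1; linarith [this.2]
  have him : |t.im| ≤ |z.im| + 1 := by
    have h1 : |t.im - z.im| ≤ 1 := le_trans (by simpa using Complex.abs_im_le_norm (t - z)) habs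
    calc |t.im| ≤ |z.im| + |t.im - z.im| := by
          have := abs_sub_abs_le_abs_sub t.im z.im; linarith [abs_sub_comm t.im z.im ▸ this]
      _ ≤ |z.im| + 1 := by linarith
  have hsq : Real.sqrt |t.im| ≤ Real.sqrt |z.im| + 1 :=
    le_trans (Real.sqrt_le_sqrt him) (sqrt_abs_add_one z.im)
  show t.re < Real.log c' - C' * Real.sqrt |t.im|
  nlinarith [Real.sqrt_nonneg |t.im|, mul_le_mul_of_nonneg_left hsq hC']

lemma eNorm_update_le {m : ℕ} (z : Fin m → ℂ) (i : Fin m) {t : ℂ}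
    (ht : t.re ≤ (z i).re + 1) :
    eNorm (Function.update z i t) ≤ Real.exp 1 * eNorm z := by
  unfold eNorm
  rw [show Real.exp 1 * Real.sqrt (∑ j, Real.exp ((z j).re) ^ 2)
      = Real.sqrt ((Real.exp 1) ^ 2 * ∑ j, Real.exp ((z j).re) ^ 2) by
    rw [Real.sqrt_mul (by positivity), Real.sqrt_sq (Real.exp_pos 1).le]]
  apply Real.sqrt_le_sqrt
  rw [Finset.mul_sum]
  apply Finset.sum_le_sum
  intro j _
  by_cases h : j = i
  · subst h
    rw [Function.update_self]
    have h1 : Real.exp t.re ≤ Real.exp 1 * Real.exp ((z j).re) := by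
      rw [← Real.exp_add]; exact Real.exp_le_exp.mpr (by linarith)
    nlinarith [Real.exp_pos t.re, Real.exp_pos ((z j).re), Real.exp_pos (1:ℝ)]
  · rw [Function.update_of_ne h]
    have h1 : (1:ℝ) ≤ Real.exp 1 := Real.one_le_exp (by norm_num)
    have h2 : (1:ℝ) ≤ Real.exp 1 ^ 2 := by nlinarith
    nlinarith [sq_nonneg (Real.exp ((z j).re))]


-- the CLM  v ↦ update v i 0
def keyU (m : ℕ) (i : Fin m) : (Fin m → ℂ) →L[ℂ] (Fin m → ℂ) :=
  ContinuousLinearMap.pi (fun j => if j = i then 0 else ContinuousLinearMap.proj j)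

lemma keyU_apply {m : ℕ} (i : Fin m) (v : Fin m → ℂ) (j : Fin m) :
    keyU m i v j = if j = i then 0 else v j := by
  simp only [keyU, ContinuousLinearMap.pi_apply]
  split <;> simp

lemma keyU_single {m : ℕ} (i : Fin m) : keyU m i (Pi.single i 1) = 0 := by
  funext j
  rw [keyU_apply]
  split
  · rfl
  · next h => simp [Pi.single_eq_of_ne h]

lemma update_eq_keyU {m : ℕ} (i : Fin m) (w : ℂ) (x : Fin m → ℂ) :
    Function.update x i w = keyU m i x + Pi.single i w := by
  funext j
  by_cases h : j = i
  · subst h; simp [keyU_apply]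
  · simp [Function.update_of_ne h, keyU_apply, h, Pi.single_eq_of_ne h]

lemma norm_keyU_le {m : ℕ} (i : Fin m) : ‖keyU m i‖ ≤ 1 := by
  apply ContinuousLinearMap.opNorm_le_bound _ zero_le_one
  intro v
  rw [one_mul]
  apply pi_norm_le_iff_of_nonneg (norm_nonneg v) |>.mpr
  intro j
  rw [keyU_apply]
  split
  · simp
  · exact norm_le_pi_norm v j

lemma norm_proj_le {m : ℕ} (i : Fin m) :
    ‖(ContinuousLinearMap.proj i : (Fin m → ℂ) →L[ℂ] ℂ)‖ ≤ 1 := by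
  apply ContinuousLinearMap.opNorm_le_bound _ zero_le_one
  intro v
  rw [one_mul]
  exact norm_le_pi_norm v i

-- bound for the full derivative from coordinatewise Cauchy estimates
lemma fderiv_opNorm_le {m : ℕ} {c C : ℝ} {f : (Fin m → ℂ) → ℂ}
    (hf : DifferentiableOn ℂ f (QDom c C m)) {z₀ : Fin m → ℂ} {r M₀ : ℝ} (hr : 0 < r)
    (hM₀0 : 0 ≤ M₀) (h3 : Metric.closedBall z₀ (3*r) ⊆ QDom c C m)
    (hM₀ : ∀ x ∈ Metric.closedBall z₀ (3*r), ‖f x‖ ≤ M₀)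
    {u : Fin m → ℂ} (hu : u ∈ Metric.closedBall z₀ (2*r)) :
    ‖fderiv ℂ f u‖ ≤ m * (M₀ / r) := by
  have hO := isOpen_QDom c C m
  have hmem3 : ∀ (j : Fin m) (t : ℂ), dist t (u j) ≤ r →
      Function.update u j t ∈ Metric.closedBall z₀ (3*r) := by
    intro j t ht
    rw [Metric.mem_closedBall]
    apply dist_pi_le_iff (by positivity) |>.mpr
    intro k
    by_cases hk : k = j
    · subst hk
      rw [Function.update_self]
      calc dist t (z₀ k) ≤ dist t (u k) + dist (u k) (z₀ k) := dist_triangle _ _ _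
        _ ≤ r + 2*r := add_le_add ht ((dist_le_pi_dist u z₀ k).trans (Metric.mem_closedBall.mp hu))
        _ = 3*r := by ring
    · rw [Function.update_of_ne hk]
      calc dist (u k) (z₀ k) ≤ 2*r := (dist_le_pi_dist u z₀ k).trans (Metric.mem_closedBall.mp hu)
        _ ≤ 3*r := by linarith
  have hpart : ∀ j : Fin m, ‖fderiv ℂ f u (Pi.single j 1)‖ ≤ M₀ / r := by
    intro j
    have hdiffAt : ∀ t : ℂ, dist t (u j) ≤ r →
        DifferentiableAt ℂ (fun s => f (Function.update u j s)) t := by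
      intro t ht
      have hfd : DifferentiableAt ℂ f (Function.update u j t) :=
        hf.differentiableAt (hO.mem_nhds (h3 (hmem3 j t ht)))
      exact (hasDerivAt_slice hfd).differentiableAt
    have hdc : DiffContOnCl ℂ (fun s => f (Function.update u j s)) (Metric.ball (u j) r) := by
      apply DifferentiableOn.diffContOnCl
      rw [closure_ball (u j) hr.ne']
      exact fun t ht => (hdiffAt t (Metric.mem_closedBall.mp ht)).differentiableWithinAt
    have hbd : ∀ w ∈ Metric.sphere (u j) r, ‖f (Function.update u j w)‖ ≤ M₀ := by
      intro w hw
      exact hM₀ _ (hmem3 j w (le_of_eq (Metric.mem_sphere.mp hw)))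
    have hC := Complex.norm_deriv_le_of_forall_mem_sphere_norm_le hr hdc hbd
    have hfd : DifferentiableAt ℂ f (Function.update u j (u j)) :=
      hf.differentiableAt (hO.mem_nhds (h3 (hmem3 j (u j) (by simp [hr.le]))))
    have heq := (hasDerivAt_slice hfd).deriv
    rw [heq, Function.update_eq_self] at hC
    exact hC
  apply ContinuousLinearMap.opNorm_le_bound _ (by positivity)
  intro v
  have hv : v = ∑ j, v j • (Pi.single j (1:ℂ) : Fin m → ℂ) := by
    conv_lhs => rw [← Finset.univ_sum_single v]
    exact Finset.sum_congr rfl fun j _ => by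
      rw [← Pi.single_smul, smul_eq_mul, mul_one]
  calc ‖fderiv ℂ f u v‖ = ‖∑ j, v j • fderiv ℂ f u (Pi.single j 1)‖ := by
        conv_lhs => rw [hv]
        rw [map_sum]
        congr 1
        exact Finset.sum_congr rfl fun j _ => (fderiv ℂ f u).map_smul _ _
    _ ≤ ∑ j, ‖v j • fderiv ℂ f u (Pi.single j 1)‖ := norm_sum_le _ _
    _ ≤ ∑ j : Fin m, ‖v‖ * (M₀ / r) := by
        apply Finset.sum_le_sum
        intro j _
        rw [norm_smul]
        exact mul_le_mul (norm_le_pi_norm v j) (hpart j) (norm_nonneg _) (norm_nonneg _)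
    _ = m * (M₀ / r) * ‖v‖ := by
        rw [Finset.sum_const, Finset.card_univ, Fintype.card_fin, nsmul_eq_mul]
        ring


def keyF (m : ℕ) (i : Fin m) (z₀ : Fin m → ℂ) (r : ℝ) (f : (Fin m → ℂ) → ℂ) (n : ℕ) :
    (Fin m → ℂ) → ℝ → ℂ :=
  fun z θ => deriv (circleMap (z₀ i) (2*r)) θ •
    (((circleMap (z₀ i) (2*r) θ - z i)⁻¹)^n *
      f (Function.update z i (circleMap (z₀ i) (2*r) θ)))

def keyF' (m : ℕ) (i : Fin m) (z₀ : Fin m → ℂ) (r : ℝ) (f : (Fin m → ℂ) → ℂ) (n : ℕ) :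
    (Fin m → ℂ) → ℝ → ((Fin m → ℂ) →L[ℂ] ℂ) :=
  fun z θ => deriv (circleMap (z₀ i) (2*r)) θ •
    ( (((circleMap (z₀ i) (2*r) θ - z i)⁻¹)^n) •
        ((fderiv ℂ f (Function.update z i (circleMap (z₀ i) (2*r) θ))).comp (keyU m i))
      + f (Function.update z i (circleMap (z₀ i) (2*r) θ)) •
        (((n:ℂ) * ((circleMap (z₀ i) (2*r) θ - z i)⁻¹)^(n+1)) •
          (ContinuousLinearMap.proj i : (Fin m → ℂ) →L[ℂ] ℂ)) )

set_option maxHeartbeats 1000000 in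
lemma keyLemma {m : ℕ} {c C : ℝ} {f : (Fin m → ℂ) → ℂ}
    (hf : DifferentiableOn ℂ f (QDom c C m)) (i : Fin m) {z₀ : Fin m → ℂ} {r : ℝ}
    (hr : 0 < r) (h3 : Metric.closedBall z₀ (3*r) ⊆ QDom c C m) (n : ℕ) (hn : n ≠ 0)
    {z : Fin m → ℂ} (hz : z ∈ Metric.ball z₀ r) :
    Integrable (keyF' m i z₀ r f n z) (volume.restrict (Set.Ioc 0 (2*Real.pi))) ∧
    HasFDerivAt (fun x => ∫ θ, keyF m i z₀ r f n x θ ∂(volume.restrict (Set.Ioc 0 (2*Real.pi))))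
      (∫ θ, keyF' m i z₀ r f n z θ ∂(volume.restrict (Set.Ioc 0 (2*Real.pi)))) z := by
  have hO := isOpen_QDom c C m
  set μ := volume.restrict (Set.Ioc 0 (2*Real.pi)) with hμ
  set κ : ℝ → ℂ := circleMap (z₀ i) (2*r) with hκdef
  have hmem2 : ∀ x ∈ Metric.ball z₀ r, ∀ θ : ℝ,
      Function.update x i (κ θ) ∈ Metric.closedBall z₀ (2*r) := by
    intro x hx θ
    rw [Metric.mem_closedBall]
    apply dist_pi_le_iff (by positivity) |>.mpr
    intro k
    by_cases hk : k = i
    · subst hk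
      rw [Function.update_self]
      exact le_of_eq (circleMap_mem_sphere (z₀ k) (by positivity) θ)
    · rw [Function.update_of_ne hk]
      calc dist (x k) (z₀ k) ≤ dist x z₀ := dist_le_pi_dist x z₀ k
        _ ≤ 2*r := by have := Metric.mem_ball.mp hx; linarith
  have h23 : Metric.closedBall z₀ (2*r) ⊆ Metric.closedBall z₀ (3*r) :=
    Metric.closedBall_subset_closedBall (by linarith)
  have hlow : ∀ x ∈ Metric.ball z₀ r, ∀ θ : ℝ, r ≤ ‖κ θ - x i‖ := by
    intro x hx θ
    have h1 : ‖κ θ - z₀ i‖ = 2*r := by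
      rw [hκdef, circleMap_sub_center, norm_circleMap_zero,
        abs_of_pos (by positivity)]
    have h2 : ‖x i - z₀ i‖ < r := by
      have := lt_of_le_of_lt (dist_le_pi_dist x z₀ i) (Metric.mem_ball.mp hx)
      rwa [dist_eq_norm] at this
    have h3' : ‖κ θ - z₀ i‖ - ‖x i - z₀ i‖ ≤ ‖(κ θ - z₀ i) - (x i - z₀ i)‖ :=
      norm_sub_norm_le _ _
    have h4 : (κ θ - z₀ i) - (x i - z₀ i) = κ θ - x i := by ring
    rw [h4, h1] at h3'
    linarith
  have hne : ∀ x ∈ Metric.ball z₀ r, ∀ θ : ℝ, κ θ - x i ≠ 0 := by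
    intro x hx θ h0
    have := hlow x hx θ
    rw [h0, norm_zero] at this
    linarith
  obtain ⟨M₀', hM₀'⟩ := (isCompact_closedBall z₀ (3*r)).exists_bound_of_continuousOn
    (hf.continuousOn.mono h3)
  set M₀ : ℝ := max M₀' 0 with hM₀def
  have hM₀0 : 0 ≤ M₀ := le_max_right _ _
  have hM₀ : ∀ x ∈ Metric.closedBall z₀ (3*r), ‖f x‖ ≤ M₀ :=
    fun x hx => (hM₀' x hx).trans (le_max_left _ _)
  set M₁ : ℝ := m * (M₀ / r) with hM₁def
  have hM₁0 : 0 ≤ M₁ := by positivity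
  have hM₁ : ∀ u ∈ Metric.closedBall z₀ (2*r), ‖fderiv ℂ f u‖ ≤ M₁ :=
    fun u hu => fderiv_opNorm_le hf hr hM₀0 h3 hM₀ hu
  have hκcont : Continuous κ := continuous_circleMap _ _
  have hdm : ∀ θ : ℝ, ‖deriv (circleMap (z₀ i) (2*r)) θ‖ = 2*r := by
    intro θ
    rw [deriv_circleMap, norm_mul, norm_circleMap_zero, Complex.norm_I,
      mul_one, abs_of_pos (by positivity)]
  have hdercont : Continuous fun θ => deriv (circleMap (z₀ i) (2*r)) θ := by
    have he : (fun θ => deriv (circleMap (z₀ i) (2*r)) θ)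
        = fun θ => circleMap 0 (2*r) θ * Complex.I := funext fun θ => deriv_circleMap _ _ _
    rw [he]
    exact (continuous_circleMap 0 (2*r)).mul continuous_const
  have hpathcont : ∀ x : Fin m → ℂ, Continuous fun θ => Function.update x i (κ θ) := by
    intro x
    apply continuous_pi
    intro j
    by_cases hj : j = i
    · subst hj
      simp only [Function.update_self]
      exact hκcont
    · simp only [Function.update_of_ne hj]
      exact continuous_const
  have hfpathcont : ∀ x ∈ Metric.ball z₀ r,
      Continuous fun θ => f (Function.update x i (κ θ)) := by
    intro x hx
    exact (hf.continuousOn.mono h3).comp_continuous (hpathcont x)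
      (fun θ => h23 (hmem2 x hx θ))
  have hinvcont : ∀ x ∈ Metric.ball z₀ r,
      Continuous fun θ => (κ θ - x i)⁻¹ := by
    intro x hx
    exact (hκcont.sub continuous_const).inv₀ (fun θ => hne x hx θ)
  have hcontF : ∀ x ∈ Metric.ball z₀ r, Continuous (keyF m i z₀ r f n x) := by
    intro x hx
    apply hdercont.smul
    exact ((hinvcont x hx).pow n).mul (hfpathcont x hx)
  -- ε and ball inclusion
  set ε : ℝ := r - dist z z₀ with hεdef
  have hε : 0 < ε := by
    have := Metric.mem_ball.mp hz; simp only [hεdef]; linarith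
  have hballsub : Metric.ball z ε ⊆ Metric.ball z₀ r :=
    Metric.ball_subset_ball' (le_of_eq (by simp only [hεdef]; ring))
  -- differentiability of the integrand in the parameter
  have h_diff : ∀ θ : ℝ, ∀ x ∈ Metric.ball z ε,
      HasFDerivAt (fun y => keyF m i z₀ r f n y θ) (keyF' m i z₀ r f n x θ) x := by
    intro θ x hx
    have hx' : x ∈ Metric.ball z₀ r := hballsub hx
    have hne' : κ θ - x i ≠ 0 := hne x hx' θ
    have hq0 : HasDerivAt (fun t : ℂ => κ θ - t) (-1) (x i) :=
      (hasDerivAt_id (x i)).const_sub (κ θ)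
    have hq1 := hq0.fun_inv hne'
    have hq2 := hq1.fun_pow n
    have hexp : n - 1 + 2 = n + 1 := by omega
    have hval : (n:ℂ) * ((κ θ - x i)⁻¹)^(n-1) * (- (-1) / (κ θ - x i)^2)
        = (n:ℂ) * ((κ θ - x i)⁻¹)^(n+1) := by
      rw [neg_neg, one_div, ← inv_pow, mul_assoc, ← pow_add, hexp]
    rw [hval] at hq2
    have hproj : HasFDerivAt (fun y : Fin m → ℂ => y i)
        (ContinuousLinearMap.proj i : (Fin m → ℂ) →L[ℂ] ℂ) x :=
      (ContinuousLinearMap.proj i : (Fin m → ℂ) →L[ℂ] ℂ).hasFDerivAt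
    have h1 : HasFDerivAt (fun y : Fin m → ℂ => ((κ θ - y i)⁻¹)^n)
        (((n:ℂ) * ((κ θ - x i)⁻¹)^(n+1)) •
          (ContinuousLinearMap.proj i : (Fin m → ℂ) →L[ℂ] ℂ)) x := by
      exact hq2.comp_hasFDerivAt (f := fun y : Fin m → ℂ => y i) x hproj
    have haff : HasFDerivAt (fun y : Fin m → ℂ => Function.update y i (κ θ)) (keyU m i) x := by
      have he : (fun y : Fin m → ℂ => Function.update y i (κ θ))
          = fun y => keyU m i y + Pi.single i (κ θ) := funext (update_eq_keyU i (κ θ))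
      rw [he]
      exact (keyU m i).hasFDerivAt.add_const _
    have hfd : DifferentiableAt ℂ f (Function.update x i (κ θ)) :=
      hf.differentiableAt (hO.mem_nhds (h3 (h23 (hmem2 x hx' θ))))
    have h2 : HasFDerivAt (fun y : Fin m → ℂ => f (Function.update y i (κ θ)))
        ((fderiv ℂ f (Function.update x i (κ θ))).comp (keyU m i)) x :=
      hfd.hasFDerivAt.comp x haff
    exact (h1.mul h2).const_smul (deriv (circleMap (z₀ i) (2*r)) θ)
  -- uniform bound
  set B : ℝ := (2*r) * ((r⁻¹)^n * M₁ + M₀ * ((n:ℝ) * (r⁻¹)^(n+1))) with hBdef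
  have hB0 : 0 ≤ B := by positivity
  have h_bound : ∀ θ : ℝ, ∀ x ∈ Metric.ball z ε, ‖keyF' m i z₀ r f n x θ‖ ≤ B := by
    intro θ x hx
    have hx' : x ∈ Metric.ball z₀ r := hballsub hx
    have hinv : ‖(κ θ - x i)⁻¹‖ ≤ r⁻¹ := by
      rw [norm_inv]
      exact inv_anti₀ hr (hlow x hx' θ)
    have hinvp : ∀ k : ℕ, ‖((κ θ - x i)⁻¹)^k‖ ≤ (r⁻¹)^k := by
      intro k
      rw [norm_pow]
      exact pow_le_pow_left₀ (norm_nonneg _) hinv k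
    have hA : ‖(((κ θ - x i)⁻¹)^n) •
        ((fderiv ℂ f (Function.update x i (κ θ))).comp (keyU m i))‖ ≤ (r⁻¹)^n * M₁ := by
      rw [norm_smul ((((κ θ - x i)⁻¹)^n : ℂ)) ((fderiv ℂ f (Function.update x i (κ θ))).comp (keyU m i))]
      apply mul_le_mul (hinvp n) _ (norm_nonneg _) (by positivity)
      calc ‖(fderiv ℂ f (Function.update x i (κ θ))).comp (keyU m i)‖
          ≤ ‖fderiv ℂ f (Function.update x i (κ θ))‖ * ‖keyU m i‖ :=
            ContinuousLinearMap.opNorm_comp_le _ _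
        _ ≤ M₁ * 1 := mul_le_mul (hM₁ _ (hmem2 x hx' θ)) (norm_keyU_le i)
            (norm_nonneg _) hM₁0
        _ = M₁ := mul_one _
    have hBq : ‖f (Function.update x i (κ θ)) •
        (((n:ℂ) * ((κ θ - x i)⁻¹)^(n+1)) •
          (ContinuousLinearMap.proj i : (Fin m → ℂ) →L[ℂ] ℂ))‖
        ≤ M₀ * ((n:ℝ) * (r⁻¹)^(n+1)) := by
      rw [norm_smul (f (Function.update x i (κ θ)))
          ((((n:ℂ) * ((κ θ - x i)⁻¹)^(n+1))) •
            (ContinuousLinearMap.proj i : (Fin m → ℂ) →L[ℂ] ℂ)),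
        norm_smul (((n:ℂ) * ((κ θ - x i)⁻¹)^(n+1)))
          (ContinuousLinearMap.proj i : (Fin m → ℂ) →L[ℂ] ℂ)]
      apply mul_le_mul (hM₀ _ (h23 (hmem2 x hx' θ))) _ (by positivity) hM₀0
      calc ‖(n:ℂ) * ((κ θ - x i)⁻¹)^(n+1)‖ * ‖(ContinuousLinearMap.proj i :
            (Fin m → ℂ) →L[ℂ] ℂ)‖
          ≤ ((n:ℝ) * (r⁻¹)^(n+1)) * 1 := by
            apply mul_le_mul _ (norm_proj_le i) (norm_nonneg _) (by positivity)
            rw [norm_mul, Complex.norm_natCast]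
            exact mul_le_mul_of_nonneg_left (hinvp (n+1)) (Nat.cast_nonneg n)
        _ = (n:ℝ) * (r⁻¹)^(n+1) := mul_one _
    calc ‖keyF' m i z₀ r f n x θ‖
        = (2*r) * ‖(((κ θ - x i)⁻¹)^n) •
            ((fderiv ℂ f (Function.update x i (κ θ))).comp (keyU m i))
          + f (Function.update x i (κ θ)) •
            (((n:ℂ) * ((κ θ - x i)⁻¹)^(n+1)) •
              (ContinuousLinearMap.proj i : (Fin m → ℂ) →L[ℂ] ℂ))‖ := by
          rw [keyF', ← hκdef]
          rw [norm_smul (deriv κ θ) ((((κ θ - x i)⁻¹)^n) •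
              ((fderiv ℂ f (Function.update x i (κ θ))).comp (keyU m i))
            + f (Function.update x i (κ θ)) •
              (((n:ℂ) * ((κ θ - x i)⁻¹)^(n+1)) •
                (ContinuousLinearMap.proj i : (Fin m → ℂ) →L[ℂ] ℂ)))]
          rw [show ‖deriv κ θ‖ = (2*r : ℝ) from by rw [hκdef]; exact hdm θ]
      _ ≤ (2*r) * ((r⁻¹)^n * M₁ + M₀ * ((n:ℝ) * (r⁻¹)^(n+1))) := by
          apply mul_le_mul_of_nonneg_left _ (by positivity)
          exact (norm_add_le _ _).trans (add_le_add hA hBq)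
  -- measurability of keyF' z
  have hF'meas : AEStronglyMeasurable (keyF' m i z₀ r f n z) μ := by
    have hL : Measurable fun θ => fderiv ℂ f (Function.update z i (κ θ)) :=
      (measurable_fderiv ℂ f).comp (hpathcont z).measurable
    have hcompc : Continuous fun L : (Fin m → ℂ) →L[ℂ] ℂ => L.comp (keyU m i) :=
      ((ContinuousLinearMap.compL ℂ (Fin m → ℂ) (Fin m → ℂ) ℂ).flip (keyU m i)).continuous
    have hLc : Measurable fun θ =>
        (fderiv ℂ f (Function.update z i (κ θ))).comp (keyU m i) :=
      hcompc.measurable.comp hL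
    have hLc' : AEStronglyMeasurable
        (fun θ => (fderiv ℂ f (Function.update z i (κ θ))).comp (keyU m i)) μ :=
      hLc.aestronglyMeasurable
    have h1 : AEStronglyMeasurable (fun θ => (((κ θ - z i)⁻¹)^n) •
        ((fderiv ℂ f (Function.update z i (κ θ))).comp (keyU m i))) μ :=
      (((hinvcont z hz).pow n).aestronglyMeasurable).smul hLc'
    have h2 : AEStronglyMeasurable (fun θ => f (Function.update z i (κ θ)) •
        (((n:ℂ) * ((κ θ - z i)⁻¹)^(n+1)) •
          (ContinuousLinearMap.proj i : (Fin m → ℂ) →L[ℂ] ℂ))) μ := by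
      apply AEStronglyMeasurable.smul ((hfpathcont z hz).aestronglyMeasurable)
      exact ((continuous_const.mul ((hinvcont z hz).pow (n+1))).aestronglyMeasurable).smul
        aestronglyMeasurable_const
    exact (hdercont.aestronglyMeasurable).smul (h1.add h2)
  -- apply the parametric-integral theorem
  have hF_meas : ∀ᶠ x in nhds z, AEStronglyMeasurable (keyF m i z₀ r f n x) μ := by
    filter_upwards [Metric.isOpen_ball.mem_nhds hz] with x hx
    exact (hcontF x hx).aestronglyMeasurable
  have hF_int : Integrable (keyF m i z₀ r f n z) μ :=
    (((hcontF z hz).continuousOn).integrableOn_compact isCompact_Icc).mono_set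
      Set.Ioc_subset_Icc_self
  have hbound_int : Integrable (fun _ : ℝ => B) μ :=
    integrableOn_const measure_Ioc_lt_top.ne
  have hF'int : Integrable (keyF' m i z₀ r f n z) μ :=
    hbound_int.mono' hF'meas
      (Filter.Eventually.of_forall fun θ => h_bound θ z (Metric.mem_ball_self hε))
  refine ⟨hF'int, ?_⟩
  clear_value κ μ ε B M₀ M₁
  exact hasFDerivAt_integral_of_dominated_of_fderiv_le (F := keyF m i z₀ r f n)
    (F' := keyF' m i z₀ r f n) (bound := fun _ => B) (μ := μ) (Metric.ball_mem_nhds z hε) hF_meas hF_int hF'meas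
    (Filter.Eventually.of_forall h_bound) hbound_int
    (Filter.Eventually.of_forall h_diff)


lemma cauchyRep {m : ℕ} {c C : ℝ} {f : (Fin m → ℂ) → ℂ}
    (hf : DifferentiableOn ℂ f (QDom c C m)) (i : Fin m) {z₀ : Fin m → ℂ} {r : ℝ}
    (hr : 0 < r) (h3 : Metric.closedBall z₀ (3*r) ⊆ QDom c C m)
    {z : Fin m → ℂ} (hz : z ∈ Metric.ball z₀ r) :
    f z = (2*Real.pi*Complex.I : ℂ)⁻¹ •
      ∫ θ in Set.Ioc 0 (2*Real.pi), keyF m i z₀ r f 1 z θ := by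
  have hO := isOpen_QDom c C m
  have hmem : ∀ t ∈ Metric.closedBall (z₀ i) (2*r),
      Function.update z i t ∈ Metric.closedBall z₀ (2*r) := by
    intro t ht
    rw [Metric.mem_closedBall]
    apply dist_pi_le_iff (by positivity) |>.mpr
    intro k
    by_cases hk : k = i
    · subst hk
      rw [Function.update_self]
      exact Metric.mem_closedBall.mp ht
    · rw [Function.update_of_ne hk]
      calc dist (z k) (z₀ k) ≤ dist z z₀ := dist_le_pi_dist z z₀ k
        _ ≤ 2*r := by have := Metric.mem_ball.mp hz; linarith
  have hsl : DiffContOnCl ℂ (fun t => f (Function.update z i t)) (Metric.ball (z₀ i) (2*r)) := by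
    apply DifferentiableOn.diffContOnCl
    rw [closure_ball (z₀ i) (by positivity : (2*r) ≠ 0)]
    intro t ht
    have hfd : DifferentiableAt ℂ f (Function.update z i t) :=
      hf.differentiableAt (hO.mem_nhds (h3 (Metric.closedBall_subset_closedBall
        (by linarith) (hmem t ht))))
    exact ((hasDerivAt_slice hfd).differentiableAt).differentiableWithinAt
  have hzi : z i ∈ Metric.ball (z₀ i) (2*r) := by
    rw [Metric.mem_ball]
    calc dist (z i) (z₀ i) ≤ dist z z₀ := dist_le_pi_dist z z₀ i
      _ < r := Metric.mem_ball.mp hz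
      _ < 2*r := by linarith
  have hC := hsl.two_pi_i_inv_smul_circleIntegral_sub_inv_smul hzi
  rw [Function.update_eq_self] at hC
  rw [← hC]
  congr 1
  rw [circleIntegral, intervalIntegral.integral_of_le Real.two_pi_pos.le]
  congr 1
  funext θ
  simp only [keyF, pow_one, smul_eq_mul]

lemma derivRep {m : ℕ} {c C : ℝ} {f : (Fin m → ℂ) → ℂ}
    (hf : DifferentiableOn ℂ f (QDom c C m)) (i : Fin m) {z₀ : Fin m → ℂ} {r : ℝ}
    (hr : 0 < r) (h3 : Metric.closedBall z₀ (3*r) ⊆ QDom c C m)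
    {z : Fin m → ℂ} (hz : z ∈ Metric.ball z₀ r) :
    fderiv ℂ f z (Pi.single i 1) = (2*Real.pi*Complex.I : ℂ)⁻¹ •
      ∫ θ in Set.Ioc 0 (2*Real.pi), keyF m i z₀ r f 2 z θ := by
  obtain ⟨hint, hder⟩ := keyLemma hf i hr h3 1 one_ne_zero hz
  have hK : HasFDerivAt (fun x => (2*Real.pi*Complex.I : ℂ)⁻¹ •
        ∫ θ in Set.Ioc 0 (2*Real.pi), keyF m i z₀ r f 1 x θ)
      ((2*Real.pi*Complex.I : ℂ)⁻¹ •
        ∫ θ in Set.Ioc 0 (2*Real.pi), keyF' m i z₀ r f 1 z θ) z := hder.fun_const_smul _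
  have heq : f =ᶠ[nhds z] (fun x => (2*Real.pi*Complex.I : ℂ)⁻¹ •
      ∫ θ in Set.Ioc 0 (2*Real.pi), keyF m i z₀ r f 1 x θ) := by
    filter_upwards [Metric.isOpen_ball.mem_nhds hz] with x hx
    exact cauchyRep hf i hr h3 hx
  have hfD : HasFDerivAt f ((2*Real.pi*Complex.I : ℂ)⁻¹ •
      ∫ θ in Set.Ioc 0 (2*Real.pi), keyF' m i z₀ r f 1 z θ) z :=
    hK.congr_of_eventuallyEq heq
  rw [hfD.fderiv, ContinuousLinearMap.smul_apply]
  congr 1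
  rw [ContinuousLinearMap.integral_apply hint]
  congr 1
  funext θ
  simp only [keyF', keyF, ContinuousLinearMap.smul_apply, ContinuousLinearMap.add_apply,
    ContinuousLinearMap.coe_comp', Function.comp_apply, ContinuousLinearMap.proj_apply,
    keyU_single i, map_zero, Pi.single_eq_same, smul_eq_mul]
  push_cast
  ring

lemma part1 {m : ℕ} {c C : ℝ} {f : (Fin m → ℂ) → ℂ}
    (hf : DifferentiableOn ℂ f (QDom c C m)) (i : Fin m) :
    DifferentiableOn ℂ (fun z => fderiv ℂ f z (Pi.single i 1)) (QDom c C m) := by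
  intro z₀ hz₀
  have hO := isOpen_QDom c C m
  obtain ⟨ρ, hρ, hball⟩ := Metric.isOpen_iff.mp hO z₀ hz₀
  have hr : 0 < ρ/4 := by linarith
  have h3 : Metric.closedBall z₀ (3*(ρ/4)) ⊆ QDom c C m := by
    refine Set.Subset.trans ?_ hball
    apply Metric.closedBall_subset_ball
    linarith
  obtain ⟨hint2, hder2⟩ := keyLemma hf i hr h3 2 two_ne_zero (Metric.mem_ball_self hr)
  have hdiff : DifferentiableAt ℂ (fun x => (2*Real.pi*Complex.I : ℂ)⁻¹ •
      ∫ θ in Set.Ioc 0 (2*Real.pi), keyF m i z₀ (ρ/4) f 2 x θ) z₀ :=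
    (hder2.const_smul ((2*Real.pi*Complex.I : ℂ)⁻¹)).differentiableAt
  have heq : (fun z => fderiv ℂ f z (Pi.single i 1)) =ᶠ[nhds z₀]
      (fun x => (2*Real.pi*Complex.I : ℂ)⁻¹ •
        ∫ θ in Set.Ioc 0 (2*Real.pi), keyF m i z₀ (ρ/4) f 2 x θ) := by
    filter_upwards [Metric.isOpen_ball.mem_nhds (Metric.mem_ball_self hr)] with x hx
    exact derivRep hf i hr h3 hx
  exact (hdiff.congr_of_eventuallyEq heq).differentiableWithinAt


end

/-- If `f` is holomorphic on `Ω(c,C)^m` with asymptotic expansion `a`,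
then the partial derivative `∂f/∂zᵢ` is holomorphic there with asymptotic expansion
`α ↦ αᵢ·a(α)`. -/
theorem stmt3 (m : ℕ) (c C : ℝ) (hc : 0 < c) (hC : 0 < C)
    (f : (Fin m → ℂ) → ℂ) (hf : DifferentiableOn ℂ f (QDom c C m))
    (a : (Fin m → ℝ) → ℂ) (ha : HasAsymExp c C f a) (i : Fin m) :
    DifferentiableOn ℂ (fun z => fderiv ℂ f z (Pi.single i 1)) (QDom c C m) ∧
    HasAsymExp c C (fun z => fderiv ℂ f z (Pi.single i 1))
      (fun α => (α i : ℂ) * a α) := by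
  have hO := isOpen_QDom c C m
  obtain ⟨⟨haNN, haFin⟩, hEst⟩ := ha
  refine ⟨?_, ⟨?_, ?_⟩, ?_⟩
  · exact part1 hf i
  · intro α hα j
    exact haNN α (fun h => hα (by simp only [h, mul_zero])) j
  · intro j R hR
    apply (haFin j R hR).subset
    rintro r ⟨⟨α, hα, rfl⟩, hr⟩
    exact ⟨⟨α, fun h => hα (by simp only [h, mul_zero]), rfl⟩, hr⟩
  · intro ν hν
    obtain ⟨c', C', hc', hC', hsub, F, hF, hEps⟩ := hEst ν hν
    have hlog : Real.log (c' * Real.exp (-(1 + C'))) = Real.log c' - (1 + C') := by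
      rw [Real.log_mul (ne_of_gt hc') (Real.exp_ne_zero _), Real.log_exp]; ring
    have hsub1 : SQD (c' * Real.exp (-(1 + C'))) C' ⊆ SQD c' C' := by
      intro w hw
      have hw' : w.re < Real.log (c' * Real.exp (-(1 + C'))) - C' * Real.sqrt |w.im| := hw
      show w.re < Real.log c' - C' * Real.sqrt |w.im|
      rw [hlog] at hw'
      linarith [hC'.le]
    have hQsub : QDom c' C' m ⊆ QDom c C m := fun w hw j => hsub (hw j)
    refine ⟨c' * Real.exp (-(1 + C')), C', by positivity, hC',
      fun w hw => hsub (hsub1 hw), F.filter (fun α => α i ≠ 0), ?_, ?_⟩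
    · intro α
      simp only [Finset.mem_filter, hF]
      constructor
      · rintro ⟨⟨h1, h2⟩, h3⟩
        exact ⟨mul_ne_zero (Complex.ofReal_ne_zero.mpr h3) h1, h2⟩
      · rintro ⟨h1, h2⟩
        have h3 := mul_ne_zero_iff.mp h1
        exact ⟨⟨h3.2, h2⟩, fun h => h3.1 (by simp [h])⟩
    · intro ε hε
      obtain ⟨δ, hδ, hbound⟩ := hEps (ε / Real.exp ν) (by positivity)
      refine ⟨δ / Real.exp 1, by positivity, ?_⟩
      intro z hz hEz
      have hball : ∀ t : ℂ, dist t (z i) ≤ 1 → Function.update z i t ∈ QDom c' C' m := by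
        intro t ht j
        by_cases h : j = i
        · subst h; rw [Function.update_self]
          exact sqd_shrink hc' hC'.le (hz j) ht
        · rw [Function.update_of_ne h]
          exact hsub1 (hz j)
      have henorm : ∀ t : ℂ, dist t (z i) ≤ 1 →
          eNorm (Function.update z i t) ≤ Real.exp 1 * eNorm z := by
        intro t ht
        apply eNorm_update_le
        have habs : ‖t - z i‖ ≤ 1 := by rwa [Complex.dist_eq] at ht
        have h1 : |t.re - (z i).re| ≤ 1 :=
          le_trans (by simpa using Complex.abs_re_le_norm (t - z i)) habs
        linarith [(abs_le.mp h1).2]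
      set M : ℝ := (ε / Real.exp ν) * (Real.exp 1 * eNorm z) ^ ν with hMdef
      set H : ℂ → ℂ := fun t => f (Function.update z i t)
        - ∑ α ∈ F, a α * expMono α (Function.update z i t) with hHdef
      have hHd : ∀ t ∈ Metric.closedBall (z i) 1,
          HasDerivAt H (fderiv ℂ f (Function.update z i t) (Pi.single i 1)
            - ∑ α ∈ F, a α * ((α i : ℂ) * expMono α (Function.update z i t))) t := by
        intro t ht
        have hmem := hball t (Metric.mem_closedBall.mp ht)
        have hfd : DifferentiableAt ℂ f (Function.update z i t) :=
          hf.differentiableAt (hO.mem_nhds (hQsub hmem))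
        exact (hasDerivAt_slice hfd).sub
          (HasDerivAt.fun_sum fun α _ => ((hasDerivAt_expMono_slice α z i t).const_mul (a α)))
      have hdc : DiffContOnCl ℂ H (Metric.ball (z i) 1) := by
        apply DifferentiableOn.diffContOnCl
        rw [closure_ball (z i) one_ne_zero]
        exact fun t ht => ((hHd t ht).differentiableAt).differentiableWithinAt
      have hMb : ∀ w ∈ Metric.sphere (z i) 1, ‖H w‖ ≤ M := by
        intro w hw
        have hdist : dist w (z i) ≤ 1 := le_of_eq (Metric.mem_sphere.mp hw)
        have hlt : eNorm (Function.update z i w) < δ := by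
          have h2 : Real.exp 1 * eNorm z < Real.exp 1 * (δ / Real.exp 1) :=
            mul_lt_mul_of_pos_left hEz (Real.exp_pos 1)
          rw [mul_div_cancel₀ _ (Real.exp_ne_zero 1)] at h2
          exact lt_of_le_of_lt (henorm w hdist) h2
        have h1 := hbound _ (hball w hdist) hlt
        refine le_trans h1 ?_
        apply mul_le_mul_of_nonneg_left _ (by positivity)
        exact Real.rpow_le_rpow (eNorm_nonneg _) (henorm w hdist) hν.le
      have hkey : ‖deriv H (z i)‖ ≤ M / 1 :=
        Complex.norm_deriv_le_of_forall_mem_sphere_norm_le one_pos hdc hMb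
      have hself : Function.update z i (z i) = z := Function.update_eq_self i z
      have hderiv : deriv H (z i) = fderiv ℂ f z (Pi.single i 1)
          - ∑ α ∈ F, a α * ((α i : ℂ) * expMono α z) := by
        have := (hHd (z i) (Metric.mem_closedBall_self zero_le_one)).deriv
        rw [this, hself]
      have hsumeq : ∑ α ∈ F.filter (fun α => α i ≠ 0), ((α i : ℂ) * a α) * expMono α z
          = ∑ α ∈ F, a α * ((α i : ℂ) * expMono α z) := by
        rw [Finset.sum_filter_of_ne]
        · exact Finset.sum_congr rfl fun α _ => by ring
        · intro α _ hne h0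
          exact hne (by rw [h0, Complex.ofReal_zero, zero_mul, zero_mul])
      have hMeq : M / 1 = ε * eNorm z ^ ν := by
        rw [div_one, hMdef, Real.mul_rpow (Real.exp_pos 1).le (eNorm_nonneg z),
          Real.exp_one_rpow]
        field_simp
      calc ‖fderiv ℂ f z (Pi.single i 1)
            - ∑ α ∈ F.filter (fun α => α i ≠ 0), ((α i : ℂ) * a α) * expMono α z‖
          = ‖deriv H (z i)‖ := by rw [hderiv, hsumeq]
        _ ≤ M / 1 := hkey
        _ = ε * eNorm z ^ ν := hMeq
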